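/- Let A ∈ ℝ^{n×n}, B ∈ ℝ^{n×m}, M ∈ ℝ^{s×s}, and let τ : ℕ → ℝ^s satisfy τ(k+1) = M τ(k) and be linearly independent. Define x̃(k) = (I_n ⊗ τ(k))ᵀ η_x and ũ(k) = (I_m ⊗ τ(k))ᵀ η_u for η_x ∈ ℝ^{ns}, η_u ∈ ℝ^{ms}. Then the algebraic condition (I_n ⊗ Mᵀ − A ⊗ I_s) η_x − (B ⊗ I_s) η_u = 0 holds if and only if x̃(k+1) = A x̃(k) + B ũ(k) for all k ∈ ℕ. -/

import Mathlib

open Matrix Kronecker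

/-- The parametrized state trajectory `x̃(k) = (I_n ⊗ τ(k))ᵀ η_x ∈ ℝ^n`. -/
def paramTraj {n s : ℕ} (τ : ℕ → Fin s → ℝ) (η : Fin n × Fin s → ℝ) (k : ℕ) :
    Fin n → ℝ :=
  fun i => ∑ j : Fin s, τ k j * η (i, j)

lemma key_lemma (n m s : ℕ)
    (A : Matrix (Fin n) (Fin n) ℝ) (B : Matrix (Fin n) (Fin m) ℝ)
    (M : Matrix (Fin s) (Fin s) ℝ) (τ : ℕ → Fin s → ℝ)
    (hrec : ∀ k : ℕ, τ (k + 1) = M.mulVec (τ k))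
    (ηx : Fin n × Fin s → ℝ) (ηu : Fin m × Fin s → ℝ) (k : ℕ) (i : Fin n) :
    τ k ⬝ᵥ (fun j => ((((1 : Matrix (Fin n) (Fin n) ℝ) ⊗ₖ Mᵀ
        - A ⊗ₖ (1 : Matrix (Fin s) (Fin s) ℝ)).mulVec ηx
      - (B ⊗ₖ (1 : Matrix (Fin s) (Fin s) ℝ)).mulVec ηu) (i, j)) )
    = paramTraj τ ηx (k + 1) i
      - (A.mulVec (paramTraj τ ηx k) + B.mulVec (paramTraj τ ηu k)) i := by
  simp only [dotProduct, mulVec, Pi.sub_apply, Pi.add_apply, Matrix.sub_apply,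
    kroneckerMap_apply, paramTraj, hrec, one_apply]
  rw [Fintype.sum_congr _ _ (fun j => by rw [Fintype.sum_prod_type])]
  simp only [transpose_apply, ite_mul, one_mul, zero_mul, mul_ite, mul_zero, sub_mul,
    Finset.sum_sub_distrib, Finset.sum_ite_eq', Finset.sum_ite_eq, Finset.mem_univ,
    if_true, mul_sub, Finset.mul_sum, Finset.sum_ite_irrel, Fintype.sum_prod_type, mul_one]
  simp only [Finset.sum_const_zero, Finset.sum_ite_eq, Finset.mem_univ, if_true]
  rw [sub_sub]
  congr 1
  · rw [Finset.sum_comm]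
    refine Finset.sum_congr rfl fun j _ => ?_
    rw [Finset.sum_mul]
    exact Finset.sum_congr rfl fun l _ => by ring
  · congr 1 <;>
    · rw [Finset.sum_comm]
      exact Finset.sum_congr rfl fun j _ => Finset.sum_congr rfl fun l _ => by ring

/-- Proposition 2: for linearly independent basis functions with `τ(k+1) = M τ(k)`, the
algebraic condition `(I_n ⊗ Mᵀ − A ⊗ I_s) η_x − (B ⊗ I_s) η_u = 0` is equivalent to the
exact LTI dynamics `x̃(k+1) = A x̃(k) + B ũ(k)` for all `k`. -/
theorem stmt_5 (n m s : ℕ)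
    (A : Matrix (Fin n) (Fin n) ℝ) (B : Matrix (Fin n) (Fin m) ℝ)
    (M : Matrix (Fin s) (Fin s) ℝ) (τ : ℕ → Fin s → ℝ)
    (hrec : ∀ k : ℕ, τ (k + 1) = M.mulVec (τ k))
    (hli : ∀ η : Fin s → ℝ, (∀ k : ℕ, τ k ⬝ᵥ η = 0) → η = 0)
    (ηx : Fin n × Fin s → ℝ) (ηu : Fin m × Fin s → ℝ) :
    (((1 : Matrix (Fin n) (Fin n) ℝ) ⊗ₖ Mᵀ
        - A ⊗ₖ (1 : Matrix (Fin s) (Fin s) ℝ)).mulVec ηx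
      - (B ⊗ₖ (1 : Matrix (Fin s) (Fin s) ℝ)).mulVec ηu = 0) ↔
    (∀ k : ℕ, paramTraj τ ηx (k + 1)
        = A.mulVec (paramTraj τ ηx k) + B.mulVec (paramTraj τ ηu k)) := by
  constructor
  · intro h k
    funext i
    have hk := key_lemma n m s A B M τ hrec ηx ηu k i
    rw [h] at hk
    simp only [Pi.zero_apply, dotProduct, mul_zero, Finset.sum_const_zero] at hk
    have := hk.symm
    rw [sub_eq_zero] at this
    simpa using this
  · intro h
    funext p
    obtain ⟨i, j⟩ := p
    have h0 : (fun j => ((((1 : Matrix (Fin n) (Fin n) ℝ) ⊗ₖ Mᵀ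
        - A ⊗ₖ (1 : Matrix (Fin s) (Fin s) ℝ)).mulVec ηx
      - (B ⊗ₖ (1 : Matrix (Fin s) (Fin s) ℝ)).mulVec ηu) (i, j))) = 0 := by
      apply hli
      intro k
      rw [key_lemma n m s A B M τ hrec ηx ηu k i, h k, sub_self]
    simpa using congrFun h0 j
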